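/- Let u and û both be twice continuously differentiable on [0,1] with u'' > 0 and û'' > 0, such that f, u'' and û'' are all logconcave and the ratio û''(t)/u''(t) is nondecreasing in t. Let (0 = s₀ < s₁ < … < s_N = 1; x₁,…,x_N) be a solution of the dual system for (f, u), and let (0 = ŝ₀ < ŝ₁ < … < ŝ_N = 1; x̂₁,…,x̂_N) be a solution of the dual system for (f, û), i.e., with μ replaced by the conditional mean μ̂ computed from û''. Then ŝ_k ≥ s_k for all k = 1,…,N−1 and x̂_k ≥ x_k for all k = 1,…,N. -/

import Mathlib

open MeasureTheory Set

/-- The mean of the "density" `g` conditional on the interval `(a, b)`. -/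
noncomputable def condMean (g : ℝ → ℝ) (a b : ℝ) : ℝ :=
  (∫ t in a..b, t * g t) / (∫ t in a..b, g t)

/-- A strictly positive function on `[0,1]` is logconcave if its log is concave there. -/
def LogConcaveOn01 (g : ℝ → ℝ) : Prop :=
  ConcaveOn ℝ (Icc (0:ℝ) 1) fun t => Real.log (g t)

/-- The dual system: cutoffs `0 = s 0 < s 1 < … < s N = 1` and signals `x 1, …, x N`. -/
def DualSystem (g w : ℝ → ℝ) (N : ℕ) (s x : ℕ → ℝ) : Prop :=
  s 0 = 0 ∧ s N = 1 ∧ (∀ k < N, s k < s (k + 1)) ∧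
    (∀ k, 1 ≤ k → k ≤ N → x k = condMean g (s (k - 1)) (s k)) ∧
    (∀ k, 1 ≤ k → k ≤ N - 1 → s k = condMean w (x k) (x (k + 1)))

namespace CMaux


lemma integral_shift (g : ℝ → ℝ) (a b m : ℝ) (hg : Continuous g) :
    ∫ t in a..b, (t - m) * g t = (∫ t in a..b, t * g t) - m * ∫ t in a..b, g t := by
  have hc : Continuous (fun t : ℝ => t * g t) := continuous_id.mul hg
  have h1 : ∀ t, (t - m) * g t = t * g t - m * g t := fun t => by ring
  simp_rw [h1]
  rw [intervalIntegral.integral_sub (hc.intervalIntegrable a b)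
    ((by fun_prop : Continuous (fun t : ℝ => m * g t)).intervalIntegrable a b), intervalIntegral.integral_const_mul]

lemma den_pos {g : ℝ → ℝ} {a b : ℝ} (hg : Continuous g) (hab : a < b)
    (hpos : ∀ t ∈ Icc a b, 0 < g t) : 0 < ∫ t in a..b, g t :=
  intervalIntegral.intervalIntegral_pos_of_pos_on (hg.intervalIntegrable a b)
    (fun x hx => hpos x ⟨hx.1.le, hx.2.le⟩) hab

/-- the centered first moment vanishes -/
lemma centered_zero {g : ℝ → ℝ} {a b : ℝ} (hg : Continuous g) (hab : a < b)
    (hpos : ∀ t ∈ Icc a b, 0 < g t) :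
    ∫ t in a..b, (t - condMean g a b) * g t = 0 := by
  rw [integral_shift g a b _ hg, condMean]
  field_simp [(den_pos hg hab hpos).ne']
  ring

lemma condMean_mem {g : ℝ → ℝ} {a b : ℝ} (hg : Continuous g) (hab : a < b)
    (hpos : ∀ t ∈ Icc a b, 0 < g t) : condMean g a b ∈ Ioo a b := by
  have hd := den_pos hg hab hpos
  have hc : Continuous (fun t : ℝ => t * g t) := continuous_id.mul hg
  constructor
  · rw [condMean, lt_div_iff₀ hd]
    have : 0 < ∫ t in a..b, (t - a) * g t := by
      have hcont : Continuous (fun t : ℝ => (t - a) * g t) := by fun_prop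
      apply intervalIntegral.intervalIntegral_pos_of_pos_on (hcont.intervalIntegrable a b)
        (fun t ht => mul_pos (by linarith [ht.1]) (hpos t ⟨ht.1.le, ht.2.le⟩)) hab
    rw [integral_shift g a b a hg] at this
    linarith
  · rw [condMean, div_lt_iff₀ hd]
    have : 0 < ∫ t in a..b, (b - t) * g t := by
      have hcont : Continuous (fun t : ℝ => (b - t) * g t) := by fun_prop
      apply intervalIntegral.intervalIntegral_pos_of_pos_on (hcont.intervalIntegrable a b)
        (fun t ht => mul_pos (by linarith [ht.2]) (hpos t ⟨ht.1.le, ht.2.le⟩)) hab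
    have h2 : ∀ t, (b - t) * g t = -((t - b) * g t) := fun t => by ring
    simp_rw [h2, intervalIntegral.integral_neg] at this
    rw [integral_shift g a b b hg] at this
    linarith

/-- MLR lemma: if h/g is "nondecreasing" (in cross-product form) on [a,b], then
the conditional mean under g is at most that under h. -/
lemma condMean_le_condMean_of_ratio {g h : ℝ → ℝ} {a b : ℝ}
    (hg : Continuous g) (hh : Continuous h) (hab : a < b)
    (hgpos : ∀ t ∈ Icc a b, 0 < g t) (hhpos : ∀ t ∈ Icc a b, 0 < h t)
    (hr : ∀ t ∈ Icc a b, ∀ t' ∈ Icc a b, t ≤ t' → h t * g t' ≤ h t' * g t) :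
    condMean g a b ≤ condMean h a b := by
  set m := condMean g a b with hm
  have hmem := condMean_mem hg hab hgpos
  have hmIcc : m ∈ Icc a b := ⟨hmem.1.le, hmem.2.le⟩
  have hgm : 0 < g m := hgpos m hmIcc
  have hhm : 0 < h m := hhpos m hmIcc
  -- pointwise: h m * ((t-m) * g t) ≤ g m * ((t-m) * h t) on [a,b]
  have key : ∀ t ∈ Icc a b, h m * ((t - m) * g t) ≤ g m * ((t - m) * h t) := by
    intro t ht
    rcases le_total t m with htm | htm
    · have := hr t ht m hmIcc htm
      nlinarith [this]
    · have := hr m hmIcc t ht htm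
      nlinarith [this]
  have hint : h m * ∫ t in a..b, (t - m) * g t ≤ g m * ∫ t in a..b, (t - m) * h t := by
    rw [← intervalIntegral.integral_const_mul, ← intervalIntegral.integral_const_mul]
    apply intervalIntegral.integral_mono_on hab.le
    · exact Continuous.intervalIntegrable (by fun_prop) a b
    · exact Continuous.intervalIntegrable (by fun_prop) a b
    · exact key
  rw [centered_zero hg hab hgpos, mul_zero] at hint
  have hpos2 : 0 ≤ ∫ t in a..b, (t - m) * h t := nonneg_of_mul_nonneg_right hint hgm
  rw [integral_shift h a b m hh] at hpos2
  have hd := den_pos hh hab hhpos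
  rw [condMean, le_div_iff₀ hd]
  linarith


/-- strictly increasing in the right endpoint -/
lemma condMean_lt_right {g : ℝ → ℝ} {a b b' : ℝ} (hg : Continuous g)
    (hab : a < b) (hbb' : b < b') (hpos : ∀ t ∈ Icc a b', 0 < g t) :
    condMean g a b < condMean g a b' := by
  have hposab : ∀ t ∈ Icc a b, 0 < g t := fun t ht => hpos t ⟨ht.1, ht.2.trans hbb'.le⟩
  set m := condMean g a b with hm
  have hmem := condMean_mem hg hab hposab
  have hc : Continuous (fun t : ℝ => (t - m) * g t) := by fun_prop
  have htail : 0 < ∫ t in b..b', (t - m) * g t := by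
    apply intervalIntegral.intervalIntegral_pos_of_pos_on (hc.intervalIntegrable b b')
      (fun t ht => mul_pos (by rcases hmem with ⟨_, h2⟩; rcases ht with ⟨h3, _⟩; linarith)
        (hpos t ⟨hab.le.trans ht.1.le, ht.2.le⟩)) hbb'
  have hsplit : (∫ t in a..b, (t - m) * g t) + ∫ t in b..b', (t - m) * g t
      = ∫ t in a..b', (t - m) * g t :=
    intervalIntegral.integral_add_adjacent_intervals (hc.intervalIntegrable a b)
      (hc.intervalIntegrable b b')
  rw [centered_zero hg hab hposab, zero_add] at hsplit
  have h0 : 0 < ∫ t in a..b', (t - m) * g t := hsplit ▸ htail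
  rw [integral_shift g a b' m hg] at h0
  have hd := den_pos hg (hab.trans hbb') hpos
  rw [condMean, lt_div_iff₀ hd]
  linarith

/-- strictly increasing in the left endpoint -/
lemma condMean_lt_left {g : ℝ → ℝ} {a a' b : ℝ} (hg : Continuous g)
    (haa' : a < a') (hab : a' < b) (hpos : ∀ t ∈ Icc a b, 0 < g t) :
    condMean g a b < condMean g a' b := by
  have hab0 : a < b := haa'.trans hab
  set m := condMean g a b with hm
  have hmem := condMean_mem hg hab0 hpos
  have hposa'b : ∀ t ∈ Icc a' b, 0 < g t := fun t ht => hpos t ⟨haa'.le.trans ht.1, ht.2⟩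
  rcases le_or_gt a' m with hcase | hcase
  · have hc : Continuous (fun t : ℝ => (t - m) * g t) := by fun_prop
    have hhead : ∫ t in a..a', (t - m) * g t < 0 := by
      have : 0 < ∫ t in a..a', (m - t) * g t := by
        have hc2 : Continuous (fun t : ℝ => (m - t) * g t) := by fun_prop
        apply intervalIntegral.intervalIntegral_pos_of_pos_on (hc2.intervalIntegrable a a')
          (fun t ht => mul_pos (by rcases ht with ⟨_, h2⟩; linarith)
            (hpos t ⟨ht.1.le, ht.2.le.trans hab.le⟩)) haa'
      have h2 : ∀ t : ℝ, (m - t) * g t = -((t - m) * g t) := fun t => by ring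
      simp_rw [h2, intervalIntegral.integral_neg] at this
      linarith
    have hsplit : (∫ t in a..a', (t - m) * g t) + ∫ t in a'..b, (t - m) * g t
        = ∫ t in a..b, (t - m) * g t :=
      intervalIntegral.integral_add_adjacent_intervals (hc.intervalIntegrable a a')
        (hc.intervalIntegrable a' b)
    rw [centered_zero hg hab0 hpos] at hsplit
    have h0 : 0 < ∫ t in a'..b, (t - m) * g t := by linarith
    rw [integral_shift g a' b m hg] at h0
    have hd := den_pos hg hab hposa'b
    rw [condMean, lt_div_iff₀ hd]
    linarith
  · have := (condMean_mem hg hab hposa'b).1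
    linarith

/-- weak combined monotonicity -/
lemma condMean_mono {g : ℝ → ℝ} {a₁ b₁ a₂ b₂ : ℝ} (hg : Continuous g)
    (hab₁ : a₁ < b₁) (hab₂ : a₂ < b₂) (ha : a₁ ≤ a₂) (hb : b₁ ≤ b₂)
    (hpos : ∀ t ∈ Icc a₁ b₂, 0 < g t) :
    condMean g a₁ b₁ ≤ condMean g a₂ b₂ := by
  have hpos1 : ∀ t ∈ Icc a₁ b₁, 0 < g t := fun t ht => hpos t ⟨ht.1, ht.2.trans hb⟩
  have hpos2 : ∀ t ∈ Icc a₂ b₂, 0 < g t := fun t ht => hpos t ⟨ha.trans ht.1, ht.2⟩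
  rcases lt_or_ge a₂ b₁ with hcase | hcase
  · have step1 : condMean g a₁ b₁ ≤ condMean g a₂ b₁ := by
      rcases eq_or_lt_of_le ha with h | h
      · rw [h]
      · exact (condMean_lt_left hg h hcase hpos1).le
    have step2 : condMean g a₂ b₁ ≤ condMean g a₂ b₂ := by
      rcases eq_or_lt_of_le hb with h | h
      · rw [h]
      · exact (condMean_lt_right hg hcase h hpos2).le
    exact step1.trans step2
  · have h1 := (condMean_mem hg hab₁ hpos1).2
    have h2 := (condMean_mem hg hab₂ hpos2).1
    linarith

/-- strict combined monotonicity (strict in left endpoint) -/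
lemma condMean_strict_mono_left {g : ℝ → ℝ} {a₁ b₁ a₂ b₂ : ℝ} (hg : Continuous g)
    (hab₁ : a₁ < b₁) (hab₂ : a₂ < b₂) (ha : a₁ < a₂) (hb : b₁ ≤ b₂)
    (hpos : ∀ t ∈ Icc a₁ b₂, 0 < g t) :
    condMean g a₁ b₁ < condMean g a₂ b₂ := by
  have hpos1 : ∀ t ∈ Icc a₁ b₁, 0 < g t := fun t ht => hpos t ⟨ht.1, ht.2.trans hb⟩
  have hpos2 : ∀ t ∈ Icc a₂ b₂, 0 < g t := fun t ht => hpos t ⟨ha.le.trans ht.1, ht.2⟩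
  rcases lt_or_ge a₂ b₁ with hcase | hcase
  · have step1 : condMean g a₁ b₁ < condMean g a₂ b₁ := condMean_lt_left hg ha hcase hpos1
    have step2 : condMean g a₂ b₁ ≤ condMean g a₂ b₂ := by
      rcases eq_or_lt_of_le hb with h | h
      · rw [h]
      · exact (condMean_lt_right hg hcase h hpos2).le
    exact step1.trans_le step2
  · have h1 := (condMean_mem hg hab₁ hpos1).2
    have h2 := (condMean_mem hg hab₂ hpos2).1
    linarith


/-- cross inequality from logconcavity -/
lemma lc_cross {g : ℝ → ℝ} (hlc : ConcaveOn ℝ (Icc (0:ℝ) 1) fun t => Real.log (g t))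
    (hpos : ∀ t ∈ Icc (0:ℝ) 1, 0 < g t) {t t' c : ℝ}
    (ht0 : 0 ≤ t) (htt' : t ≤ t') (hc : 0 ≤ c) (htop : t' + c ≤ 1) :
    g t * g (t' + c) ≤ g t' * g (t + c) := by
  have hmt : t ∈ Icc (0:ℝ) 1 := ⟨ht0, by linarith⟩
  have hmt' : t' ∈ Icc (0:ℝ) 1 := ⟨by linarith, by linarith⟩
  have hmtc : t + c ∈ Icc (0:ℝ) 1 := ⟨by linarith, by linarith⟩
  have hmt'c : t' + c ∈ Icc (0:ℝ) 1 := ⟨by linarith, htop⟩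
  have hlog : Real.log (g t) + Real.log (g (t' + c))
      ≤ Real.log (g t') + Real.log (g (t + c)) := by
    rcases eq_or_lt_of_le htt' with heq | hlt
    · subst heq; ring_nf; exact le_refl _
    rcases eq_or_lt_of_le hc with heq | hcpos
    · rw [← heq]; simp only [add_zero]; linarith
    · set L := t' - t + c with hL
      have hLpos : 0 < L := by simp [hL]; linarith
      set μ := c / L with hμ
      set ν := (t' - t) / L with hν
      have hμ0 : 0 ≤ μ := div_nonneg hc hLpos.le
      have hν0 : 0 ≤ ν := div_nonneg (by linarith) hLpos.le
      have hsum : ν + μ = 1 := by rw [hν, hμ, ← add_div, hL]; exact div_self (ne_of_gt (by linarith))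
      have e1 : ν • t + μ • (t' + c) = t + c := by
        simp only [smul_eq_mul, hν, hμ]; field_simp; ring
      have e2 : μ • t + ν • (t' + c) = t' := by
        simp only [smul_eq_mul, hν, hμ]; field_simp; ring
      have i1 := hlc.2 hmt hmt'c hν0 hμ0 hsum
      have i2 := hlc.2 hmt hmt'c hμ0 hν0 (by linarith)
      rw [e1] at i1
      rw [e2] at i2
      simp only [smul_eq_mul] at i1 i2
      have hkey : ν * Real.log (g t) + μ * Real.log (g (t' + c))
          + (μ * Real.log (g t) + ν * Real.log (g (t' + c)))
          = Real.log (g t) + Real.log (g (t' + c)) := by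
        linear_combination (Real.log (g t) + Real.log (g (t' + c))) * hsum
      linarith
  have := Real.exp_le_exp.mpr hlog
  rw [Real.exp_add, Real.exp_add, Real.exp_log (hpos t hmt), Real.exp_log (hpos t' hmt'),
    Real.exp_log (hpos _ hmtc), Real.exp_log (hpos _ hmt'c)] at this
  exact this


/-- translation property for logconcave densities -/
lemma condMean_translate {g : ℝ → ℝ} (hg : Continuous g)
    (hlc : ConcaveOn ℝ (Icc (0:ℝ) 1) fun t => Real.log (g t))
    (hpos : ∀ t ∈ Icc (0:ℝ) 1, 0 < g t) {a b c : ℝ}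
    (ha : 0 ≤ a) (hab : a < b) (hc : 0 ≤ c) (hbc : b + c ≤ 1) :
    condMean g (a + c) (b + c) ≤ condMean g a b + c := by
  set h : ℝ → ℝ := fun t => g (t + c) with hh
  have hhc : Continuous h := hg.comp (continuous_add_right c)
  have hposh : ∀ t ∈ Icc a b, 0 < h t := fun t ht =>
    hpos (t + c) ⟨by linarith [ht.1], by linarith [ht.2]⟩
  have hposg : ∀ t ∈ Icc a b, 0 < g t := fun t ht =>
    hpos t ⟨by linarith [ht.1], by linarith [ht.2]⟩
  have hd : 0 < ∫ t in a..b, h t := den_pos hhc hab hposh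
  have eden : ∫ t in (a+c)..(b+c), g t = ∫ t in a..b, h t :=
    (intervalIntegral.integral_comp_add_right g c).symm
  have enum : ∫ t in (a+c)..(b+c), t * g t = ∫ t in a..b, (t + c) * h t :=
    (intervalIntegral.integral_comp_add_right (fun t => t * g t) c).symm
  have esplit : ∫ t in a..b, (t + c) * h t
      = (∫ t in a..b, t * h t) + c * ∫ t in a..b, h t := by
    have h1 : ∀ t : ℝ, (t + c) * h t = t * h t + c * h t := fun t => by ring
    simp_rw [h1]
    rw [intervalIntegral.integral_add (Continuous.intervalIntegrable (by fun_prop) a b)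
      (Continuous.intervalIntegrable (by fun_prop) a b),
      intervalIntegral.integral_const_mul]
  have e0 : condMean g (a + c) (b + c) = condMean h a b + c := by
    rw [condMean, condMean, eden, enum, esplit]
    field_simp
  rw [e0]
  have hle : condMean h a b ≤ condMean g a b := by
    apply condMean_le_condMean_of_ratio hhc hg hab hposh hposg
    intro t ht t' ht' htt'
    have := lc_cross hlc hpos (t := t) (t' := t') (c := c)
      (by linarith [ht.1]) htt' hc (by linarith [ht'.2])
    simpa [hh, mul_comm] using this
  linarith

/-- the clamped shift bound (weak) -/
lemma condMean_clamp {g : ℝ → ℝ} (hg : Continuous g)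
    (hlc : ConcaveOn ℝ (Icc (0:ℝ) 1) fun t => Real.log (g t))
    (hpos : ∀ t ∈ Icc (0:ℝ) 1, 0 < g t) {A B A' B' ε : ℝ}
    (hA : 0 ≤ A) (hAB : A < B) (hB : B ≤ 1)
    (hA' : 0 ≤ A') (hA'B' : A' < B') (hB' : B' ≤ 1)
    (hε : 0 ≤ ε) (h1 : A' ≤ A + ε) (h2 : B' ≤ B + ε) :
    condMean g A' B' ≤ condMean g A B + ε := by
  obtain ⟨δ, hδ⟩ : ∃ δ, δ = max (max (A' - A) (B' - B)) 0 := ⟨_, rfl⟩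
  have htri : δ = A' - A ∨ δ = B' - B ∨ δ = 0 := by
    rcases max_cases (max (A' - A) (B' - B)) (0:ℝ) with ⟨he, _⟩ | ⟨he, _⟩
    · rcases max_cases (A' - A) (B' - B) with ⟨he2, _⟩ | ⟨he2, _⟩
      · left; rw [hδ, he, he2]
      · right; left; rw [hδ, he, he2]
    · right; right; rw [hδ, he]
  have hδ0 : 0 ≤ δ := hδ ▸ le_max_right _ _
  have hδε : δ ≤ ε := hδ ▸ max_le (max_le (by linarith) (by linarith)) hε
  have h1δ : A' ≤ A + δ := by
    have := (le_max_left (A' - A) (B' - B)).trans (le_max_left _ (0:ℝ)); rw [← hδ] at this; linarith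
  have h2δ : B' ≤ B + δ := by
    have := (le_max_right (A' - A) (B' - B)).trans (le_max_left _ (0:ℝ)); rw [← hδ] at this; linarith
  suffices hs : condMean g A' B' ≤ condMean g A B + δ by linarith
  by_cases hbd : B + δ ≤ 1
  · calc condMean g A' B' ≤ condMean g (A + δ) (B + δ) := by
          apply condMean_mono hg hA'B' (by linarith) h1δ h2δ
          exact fun t ht => hpos t ⟨le_trans hA' ht.1, le_trans ht.2 hbd⟩
      _ ≤ condMean g A B + δ := condMean_translate hg hlc hpos hA hAB hδ0 hbd
  · push_neg at hbd
    have hδpos : 0 < δ := by linarith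
    have hB'B : B' - B < δ := by linarith
    have hδA : δ = A' - A := by
      rcases htri with h | h | h
      · exact h
      · exfalso; linarith
      · exfalso; linarith
    by_cases hc2 : A < B' - δ
    · have eA' : A' = A + δ := by linarith
      have eB' : B' = (B' - δ) + δ := by ring
      rw [eA', eB']
      calc condMean g (A + δ) ((B' - δ) + δ) ≤ condMean g A (B' - δ) + δ :=
            condMean_translate hg hlc hpos hA hc2 hδ0 (by linarith)
        _ ≤ condMean g A B + δ := by
            have hmono : condMean g A (B' - δ) ≤ condMean g A B := by
              apply condMean_mono hg hc2 hAB le_rfl (by linarith)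
              exact fun t ht => hpos t ⟨le_trans hA ht.1, le_trans ht.2 hB⟩
            linarith
    · push_neg at hc2
      have l1 : condMean g A' B' < B' :=
        (condMean_mem hg hA'B' (fun t ht => hpos t ⟨le_trans hA' ht.1, le_trans ht.2 hB'⟩)).2
      have l2 : A < condMean g A B :=
        (condMean_mem hg hAB (fun t ht => hpos t ⟨le_trans hA ht.1, le_trans ht.2 hB⟩)).1
      linarith

/-- the clamped shift bound (strict, when the left endpoint gap is strict) -/
lemma condMean_clamp_lt {g : ℝ → ℝ} (hg : Continuous g)
    (hlc : ConcaveOn ℝ (Icc (0:ℝ) 1) fun t => Real.log (g t))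
    (hpos : ∀ t ∈ Icc (0:ℝ) 1, 0 < g t) {A B A' B' ε : ℝ}
    (hA : 0 ≤ A) (hAB : A < B) (hB : B ≤ 1)
    (hA' : 0 ≤ A') (hA'B' : A' < B') (hB' : B' ≤ 1)
    (hε : 0 < ε) (h1 : A' < A + ε) (h2 : B' ≤ B + ε) :
    condMean g A' B' < condMean g A B + ε := by
  obtain ⟨δ, hδ⟩ : ∃ δ, δ = max (max (A' - A) (B' - B)) 0 := ⟨_, rfl⟩
  have htri : δ = A' - A ∨ δ = B' - B ∨ δ = 0 := by
    rcases max_cases (max (A' - A) (B' - B)) (0:ℝ) with ⟨he, _⟩ | ⟨he, _⟩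
    · rcases max_cases (A' - A) (B' - B) with ⟨he2, _⟩ | ⟨he2, _⟩
      · left; rw [hδ, he, he2]
      · right; left; rw [hδ, he, he2]
    · right; right; rw [hδ, he]
  have hδ0 : 0 ≤ δ := hδ ▸ le_max_right _ _
  have hδε : δ ≤ ε := hδ ▸ max_le (max_le (by linarith) (by linarith)) hε.le
  have h1δ : A' ≤ A + δ := by
    have := (le_max_left (A' - A) (B' - B)).trans (le_max_left _ (0:ℝ)); rw [← hδ] at this; linarith
  have h2δ : B' ≤ B + δ := by
    have := (le_max_right (A' - A) (B' - B)).trans (le_max_left _ (0:ℝ)); rw [← hδ] at this; linarith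
  rcases lt_or_eq_of_le hδε with hlt | heq
  · have := condMean_clamp hg hlc hpos hA hAB hB hA' hA'B' hB' hδ0 h1δ h2δ
    linarith
  · -- δ = ε; then ε = B' - B
    have hεB : ε = B' - B := by
      rcases htri with h | h | h
      · exfalso; rw [h] at heq; linarith
      · rw [← heq, h]
      · exfalso; rw [h] at heq; linarith
    have hBε : B + ε ≤ 1 := by linarith
    calc condMean g A' B' < condMean g (A + ε) (B + ε) := by
          apply condMean_strict_mono_left hg hA'B' (by linarith) h1 (by linarith)
          exact fun t ht => hpos t ⟨le_trans hA' ht.1, le_trans ht.2 hBε⟩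
      _ ≤ condMean g A B + ε := condMean_translate hg hlc hpos hA hAB hε.le hBε

lemma s_mono {s : ℕ → ℝ} {N : ℕ} (h : ∀ k < N, s k < s (k + 1)) :
    ∀ {k l}, k ≤ l → l ≤ N → s k ≤ s l := by
  intro k l hkl hlN
  induction l with
  | zero => have : k = 0 := by omega
            simp [this]
  | succ n ih =>
      rcases Nat.lt_succ_iff_lt_or_eq.mp (Nat.lt_succ_of_le hkl) with hlt | heq
      · exact (ih (by omega) (by omega)).trans (h n (by omega)).le
      · rw [heq]


end CMaux

open CMaux in
/-- comparative statics: likelihood-ratio increase of the curvature. -/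
theorem stmt_7 (f u uhat : ℝ → ℝ) (N : ℕ) (hN : 2 ≤ N)
    (hf_cont : Continuous f) (hf_pos : ∀ t ∈ Icc (0:ℝ) 1, 0 < f t)
    (hf_prob : (∫ t in (0:ℝ)..1, f t) = 1)
    (hu : ContDiff ℝ 2 u)
    (hu'' : ∀ t ∈ Icc (0:ℝ) 1, 0 < deriv (deriv u) t)
    (huhat : ContDiff ℝ 2 uhat)
    (huhat'' : ∀ t ∈ Icc (0:ℝ) 1, 0 < deriv (deriv uhat) t)
    (hf_lc : LogConcaveOn01 f) (hu_lc : LogConcaveOn01 (deriv (deriv u)))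
    (huhat_lc : LogConcaveOn01 (deriv (deriv uhat)))
    (hratio : MonotoneOn (fun t => deriv (deriv uhat) t / deriv (deriv u) t) (Icc (0:ℝ) 1))
    (s x shat xhat : ℕ → ℝ)
    (h1 : DualSystem f (deriv (deriv u)) N s x)
    (h2 : DualSystem f (deriv (deriv uhat)) N shat xhat) :
    (∀ k, 1 ≤ k → k ≤ N - 1 → s k ≤ shat k) ∧
    (∀ k, 1 ≤ k → k ≤ N → x k ≤ xhat k) := by
  obtain ⟨hs0, hsN, hsinc, hxdef, hsdef⟩ := h1
  obtain ⟨ht0, htN, htinc, hydef, htdef⟩ := h2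
  -- continuity of second derivatives
  have hg1c : Continuous (deriv (deriv u)) := by
    have h1' : ContDiff ℝ (1+1) u := by norm_num; exact hu
    exact (contDiff_succ_iff_deriv.mp h1').2.2.continuous_deriv le_rfl
  have hg2c : Continuous (deriv (deriv uhat)) := by
    have h1' : ContDiff ℝ (1+1) uhat := by norm_num; exact huhat
    exact (contDiff_succ_iff_deriv.mp h1').2.2.continuous_deriv le_rfl
  -- basic ordering facts for s
  have hsm : ∀ {k l}, k ≤ l → l ≤ N → s k ≤ s l := s_mono hsinc
  have htm : ∀ {k l}, k ≤ l → l ≤ N → shat k ≤ shat l := s_mono htinc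
  have hsIcc : ∀ k, k ≤ N → s k ∈ Icc (0:ℝ) 1 := fun k hk =>
    ⟨hs0 ▸ hsm (Nat.zero_le k) hk, hsN ▸ hsm hk le_rfl⟩
  have htIcc : ∀ k, k ≤ N → shat k ∈ Icc (0:ℝ) 1 := fun k hk =>
    ⟨ht0 ▸ htm (Nat.zero_le k) hk, htN ▸ htm hk le_rfl⟩
  -- x bounds
  have hxmem : ∀ k, 1 ≤ k → k ≤ N → x k ∈ Ioo (s (k - 1)) (s k) := by
    intro k hk1 hkN
    rw [hxdef k hk1 hkN]
    have hlt : s (k - 1) < s k := by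
      have := hsinc (k - 1) (by omega)
      have e : k - 1 + 1 = k := by omega
      rwa [e] at this
    exact condMean_mem hf_cont hlt (fun t ht => hf_pos t
      ⟨le_trans (hsIcc (k - 1) (by omega)).1 ht.1, le_trans ht.2 (hsIcc k hkN).2⟩)
  have hymem : ∀ k, 1 ≤ k → k ≤ N → xhat k ∈ Ioo (shat (k - 1)) (shat k) := by
    intro k hk1 hkN
    rw [hydef k hk1 hkN]
    have hlt : shat (k - 1) < shat k := by
      have := htinc (k - 1) (by omega)
      have e : k - 1 + 1 = k := by omega
      rwa [e] at this
    exact condMean_mem hf_cont hlt (fun t ht => hf_pos t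
      ⟨le_trans (htIcc (k - 1) (by omega)).1 ht.1, le_trans ht.2 (htIcc k hkN).2⟩)
  have hxIcc : ∀ k, 1 ≤ k → k ≤ N → x k ∈ Icc (0:ℝ) 1 := fun k hk1 hkN =>
    ⟨le_trans (hsIcc (k-1) (by omega)).1 (hxmem k hk1 hkN).1.le,
     le_trans (hxmem k hk1 hkN).2.le (hsIcc k hkN).2⟩
  have hyIcc : ∀ k, 1 ≤ k → k ≤ N → xhat k ∈ Icc (0:ℝ) 1 := fun k hk1 hkN =>
    ⟨le_trans (htIcc (k-1) (by omega)).1 (hymem k hk1 hkN).1.le,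
     le_trans (hymem k hk1 hkN).2.le (htIcc k hkN).2⟩
  have hxlt : ∀ k, 1 ≤ k → k ≤ N - 1 → x k < x (k + 1) := by
    intro k hk1 hkN
    have a1 := (hxmem k hk1 (by omega)).2
    have a2 := (hxmem (k+1) (by omega) (by omega)).1
    simp only [Nat.add_sub_cancel] at a2
    linarith
  have hylt : ∀ k, 1 ≤ k → k ≤ N - 1 → xhat k < xhat (k + 1) := by
    intro k hk1 hkN
    have a1 := (hymem k hk1 (by omega)).2
    have a2 := (hymem (k+1) (by omega) (by omega)).1
    simp only [Nat.add_sub_cancel] at a2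
    linarith
  -- the finite max
  classical
  set D : Finset ℝ := (Finset.range (N+1)).image (fun k => s k - shat k) ∪
      (Finset.Icc 1 N).image (fun k => x k - xhat k) with hD
  have hne : D.Nonempty := by
    refine Finset.Nonempty.inl ⟨s 0 - shat 0, ?_⟩
    exact Finset.mem_image.mpr ⟨0, Finset.mem_range.mpr (by omega), rfl⟩
  set ε := D.max' hne with hε
  have hsle : ∀ k, k ≤ N → s k - shat k ≤ ε := fun k hk =>
    D.le_max' _ (Finset.mem_union_left _
      (Finset.mem_image.mpr ⟨k, Finset.mem_range.mpr (by omega), rfl⟩))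
  have hxle : ∀ k, 1 ≤ k → k ≤ N → x k - xhat k ≤ ε := fun k hk1 hkN =>
    D.le_max' _ (Finset.mem_union_right _
      (Finset.mem_image.mpr ⟨k, Finset.mem_Icc.mpr ⟨hk1, hkN⟩, rfl⟩))
  have hεle : ε ≤ 0 := by
    by_contra hcon
    push_neg at hcon
    -- Claim 1
    have claim1 : ∀ k, 1 ≤ k → k ≤ N → x k - xhat k = ε → s (k-1) - shat (k-1) = ε := by
      intro k hk1 hkN heq
      by_contra hne'
      have hlt : s (k-1) < shat (k-1) + ε := by
        have h := hsle (k-1) (by omega)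
        rcases lt_or_eq_of_le h with h' | h'
        · linarith
        · exact absurd h' hne'
      have hxlt' : x k < xhat k + ε := by
        rw [hxdef k hk1 hkN, hydef k hk1 hkN]
        have hslt : s (k-1) < s k := by
          have := hsinc (k-1) (by omega)
          have e : k - 1 + 1 = k := by omega
          rwa [e] at this
        have htlt : shat (k-1) < shat k := by
          have := htinc (k-1) (by omega)
          have e : k - 1 + 1 = k := by omega
          rwa [e] at this
        exact condMean_clamp_lt hf_cont hf_lc hf_pos
          (htIcc (k-1) (by omega)).1 htlt (htIcc k hkN).2
          (hsIcc (k-1) (by omega)).1 hslt (hsIcc k hkN).2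
          hcon hlt (by have := hsle k hkN; linarith)
      linarith
    -- Claim 2
    have claim2 : ∀ k, 1 ≤ k → k ≤ N - 1 → s k - shat k = ε → x k - xhat k = ε := by
      intro k hk1 hkN heq
      by_contra hne'
      have hlt : x k < xhat k + ε := by
        have h := hxle k hk1 (by omega)
        rcases lt_or_eq_of_le h with h' | h'
        · linarith
        · exact absurd h' hne'
      have hstep1 : s k ≤ condMean (deriv (deriv uhat)) (x k) (x (k+1)) := by
        rw [hsdef k hk1 hkN]
        apply condMean_le_condMean_of_ratio hg1c hg2c (hxlt k hk1 hkN)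
        · intro t ht
          exact hu'' t ⟨le_trans (hxIcc k hk1 (by omega)).1 ht.1,
            le_trans ht.2 (hxIcc (k+1) (by omega) (by omega)).2⟩
        · intro t ht
          exact huhat'' t ⟨le_trans (hxIcc k hk1 (by omega)).1 ht.1,
            le_trans ht.2 (hxIcc (k+1) (by omega) (by omega)).2⟩
        · intro t ht t' ht' htt'
          have hsub : Icc (x k) (x (k+1)) ⊆ Icc (0:ℝ) 1 := fun z hz =>
            ⟨le_trans (hxIcc k hk1 (by omega)).1 hz.1,
             le_trans hz.2 (hxIcc (k+1) (by omega) (by omega)).2⟩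
          have hmem := hsub ht
          have hmem' := hsub ht'
          have hr := hratio hmem hmem' htt'
          have hp := hu'' t hmem
          have hp' := hu'' t' hmem'
          simp only at hr
          rw [div_le_div_iff₀ hp hp'] at hr
          linarith
      have hstep2 : condMean (deriv (deriv uhat)) (x k) (x (k+1)) <
          condMean (deriv (deriv uhat)) (xhat k) (xhat (k+1)) + ε := by
        apply condMean_clamp_lt hg2c huhat_lc huhat''
          (hyIcc k hk1 (by omega)).1 (hylt k hk1 hkN) (hyIcc (k+1) (by omega) (by omega)).2
          (hxIcc k hk1 (by omega)).1 (hxlt k hk1 hkN) (hxIcc (k+1) (by omega) (by omega)).2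
          hcon hlt
        have := hxle (k+1) (by omega) (by omega)
        linarith
      rw [← htdef k hk1 hkN] at hstep2
      linarith
    -- downward induction
    have hind : ∀ j, j ≤ N - 1 → s j - shat j ≠ ε := by
      intro j
      induction j with
      | zero => intro _ h0; rw [hs0, ht0] at h0; simp at h0; linarith
      | succ n ih =>
          intro hle' heq
          have hx' := claim2 (n+1) (by omega) hle' heq
          have hs' := claim1 (n+1) (by omega) (by omega) hx'
          simp only [Nat.add_sub_cancel] at hs'
          exact ih (by omega) hs'
    -- the max is attained somewhere
    have hmem := D.max'_mem hne
    rw [← hε] at hmem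
    rcases Finset.mem_union.mp hmem with hm | hm
    · obtain ⟨k, hk, hk2⟩ := Finset.mem_image.mp hm
      have hkN : k ≤ N := by have := Finset.mem_range.mp hk; omega
      by_cases hkeq : k = N
      · rw [hkeq, hsN, htN] at hk2; linarith
      · exact hind k (by omega) hk2
    · obtain ⟨k, hk, hk2⟩ := Finset.mem_image.mp hm
      obtain ⟨hk1, hkN⟩ := Finset.mem_Icc.mp hk
      have hs' := claim1 k hk1 hkN hk2
      exact hind (k-1) (by omega) hs'
  constructor
  · intro k hk1 hkN
    have := hsle k (by omega)
    linarith
  · intro k hk1 hkN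
    have := hxle k hk1 hkN
    linarith
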